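/- For every k ∈ ℕ with k ≥ 1, every real α and every real x, the k-th matrix power of the generalized Euler matrix satisfies (𝓔^{(α)}(x))^k = 𝓔^{(kα)}(kx); in particular (𝓔(x))^k = 𝓔^{(k)}(kx) and 𝓔^k = 𝓔^{(k)}(0). -/

import Mathlib

noncomputable section

/-- `E α x k` is the generalized Euler polynomial `E_k^{(α)}(x)`, characterized by the
generating function `(2/(e^z+1))^α e^{xz} = Σ_k E_k^{(α)}(x) z^k / k!` for `|z| < π`. -/
def IsGenEulerFamily (E : ℝ → ℝ → ℕ → ℝ) : Prop :=
  ∀ α x z : ℝ, |z| < Real.pi →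
    HasSum (fun k : ℕ => E α x k * z ^ k / (Nat.factorial k : ℝ))
      ((2 / (Real.exp z + 1)) ^ α * Real.exp (x * z))

/-- The generalized `(n+1)×(n+1)` Euler matrix `𝓔^{(α)}(x)`, with `(i,j)` entry
`C(i,j) E_{i-j}^{(α)}(x)` (which is `0` for `j > i` since then `C(i,j) = 0`). -/
def genEulerMatrix (E : ℝ → ℝ → ℕ → ℝ) (n : ℕ) (α x : ℝ) :
    Matrix (Fin (n + 1)) (Fin (n + 1)) ℝ :=
  Matrix.of fun i j => (Nat.choose (i : ℕ) (j : ℕ) : ℝ) * E α x ((i : ℕ) - (j : ℕ))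

open Real Filter Finset

lemma abs_summable_of_hasSum (c : ℕ → ℝ) (F : ℝ → ℝ)
    (h : ∀ z : ℝ, |z| < Real.pi → HasSum (fun n => c n * z ^ n) (F z))
    {z : ℝ} (hz : |z| < Real.pi) :
    Summable fun n => ‖c n * z ^ n‖ := by
  set r : ℝ := (|z| + Real.pi) / 2 with hr
  have hz0 : 0 ≤ |z| := abs_nonneg z
  have hrpos : 0 < r := by positivity
  have hzr : |z| < r := by simp only [hr]; linarith
  have hrpi : r < Real.pi := by simp only [hr]; linarith
  have hsum := h r (by rwa [abs_of_pos hrpos])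
  have htend : Tendsto (fun n => |c n * r ^ n|) atTop (nhds 0) := by
    simpa using hsum.summable.tendsto_atTop_zero.abs
  obtain ⟨M, hM⟩ := htend.bddAbove_range
  simp only [mem_upperBounds, Set.mem_range, forall_exists_index] at hM
  have hMb : ∀ n, |c n * r ^ n| ≤ M := fun n => hM _ n rfl
  set q : ℝ := |z| / r with hq
  have hq0 : 0 ≤ q := by positivity
  have hq1 : q < 1 := (div_lt_one hrpos).2 hzr
  refine Summable.of_nonneg_of_le (fun n => norm_nonneg _) (fun n => ?_)
    ((summable_geometric_of_lt_one hq0 hq1).mul_left M)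
  have : ‖c n * z ^ n‖ = |c n * r ^ n| * q ^ n := by
    have hrne : r ≠ 0 := ne_of_gt hrpos
    rw [norm_eq_abs, abs_mul, abs_mul, abs_pow, abs_pow, abs_of_pos hrpos, hq, div_pow]
    rw [← div_pow, ← hr, mul_assoc, ← mul_pow, mul_div_cancel₀ _ hrne]
  rw [this]
  have := hMb n
  have h2 : (0:ℝ) ≤ q ^ n := by positivity
  nlinarith [abs_nonneg (c n * r ^ n)]

lemma coeff_unique (a b : ℕ → ℝ) (F : ℝ → ℝ)
    (ha : ∀ z : ℝ, |z| < Real.pi → HasSum (fun n => a n * z ^ n) (F z))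
    (hb : ∀ z : ℝ, |z| < Real.pi → HasSum (fun n => b n * z ^ n) (F z)) : a = b := by
  have key : ∀ c : ℕ → ℝ, (∀ z : ℝ, |z| < Real.pi → HasSum (fun n => c n * z ^ n) (F z)) →
      HasFPowerSeriesAt F (FormalMultilinearSeries.ofScalars ℝ c) 0 := by
    intro c hc
    rw [hasFPowerSeriesAt_iff]
    filter_upwards [Metric.ball_mem_nhds (0:ℝ) Real.pi_pos] with z hz
    have hz' : |z| < Real.pi := by simpa [Real.dist_eq] using hz
    have := hc z hz'
    simp only [zero_add]
    convert this using 2 with n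
    · rfl
    simp [FormalMultilinearSeries.coeff_ofScalars, mul_comm]
  have := (key a ha).eq_formalMultilinearSeries (key b hb)
  rwa [FormalMultilinearSeries.ofScalars_series_eq_iff] at this

lemma hasSum_aux (E : ℝ → ℝ → ℕ → ℝ) (hE : IsGenEulerFamily E) (α x : ℝ) :
    ∀ z : ℝ, |z| < Real.pi →
      HasSum (fun n => (E α x n / (Nat.factorial n : ℝ)) * z ^ n)
        ((2 / (Real.exp z + 1)) ^ α * Real.exp (x * z)) := by
  intro z hz
  have h' : (fun k : ℕ => E α x k * z ^ k / (Nat.factorial k : ℝ))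
      = fun k => (E α x k / (Nat.factorial k : ℝ)) * z ^ k := by
    funext k; ring
  have := hE α x z hz
  rwa [h'] at this

lemma euler_add_formula (E : ℝ → ℝ → ℕ → ℝ) (hE : IsGenEulerFamily E) (α β x y : ℝ) (m : ℕ) :
    E (α + β) (x + y) m =
      ∑ j ∈ Finset.range (m + 1),
        (Nat.choose m j : ℝ) * E α x j * E β y (m - j) := by
  set a : ℕ → ℝ := fun n => E α x n / (Nat.factorial n : ℝ) with ha_def
  set b : ℕ → ℝ := fun n => E β y n / (Nat.factorial n : ℝ) with hb_def
  set c : ℕ → ℝ := fun n => ∑ j ∈ Finset.range (n + 1), a j * b (n - j) with hc_def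
  set F : ℝ → ℝ := fun z => (2 / (Real.exp z + 1)) ^ (α + β) * Real.exp ((x + y) * z)
    with hF_def
  have ha := hasSum_aux E hE α x
  have hb := hasSum_aux E hE β y
  have hc : ∀ z : ℝ, |z| < Real.pi → HasSum (fun n => c n * z ^ n) (F z) := by
    intro z hz
    have sA := abs_summable_of_hasSum a _ ha hz
    have sB := abs_summable_of_hasSum b _ hb hz
    have hprod := hasSum_sum_range_mul_of_summable_norm sA sB
    rw [(ha z hz).tsum_eq, (hb z hz).tsum_eq] at hprod
    have hfun : (fun n => ∑ k ∈ Finset.range (n + 1), (a k * z ^ k) * (b (n - k) * z ^ (n - k)))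
        = fun n => c n * z ^ n := by
      funext n
      rw [hc_def]
      rw [Finset.sum_mul]
      refine Finset.sum_congr rfl fun k hk => ?_
      have hk' : k ≤ n := Nat.lt_succ_iff.mp (Finset.mem_range.mp hk)
      have : z ^ k * z ^ (n - k) = z ^ n := by
        rw [← pow_add, Nat.add_sub_cancel' hk']
      calc a k * z ^ k * (b (n - k) * z ^ (n - k))
          = a k * b (n - k) * (z ^ k * z ^ (n - k)) := by ring
        _ = a k * b (n - k) * z ^ n := by rw [this]
    rw [hfun] at hprod
    have hval : (2 / (Real.exp z + 1)) ^ α * Real.exp (x * z) *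
        ((2 / (Real.exp z + 1)) ^ β * Real.exp (y * z)) = F z := by
      have hpos : (0:ℝ) < 2 / (Real.exp z + 1) := by positivity
      simp only [hF_def]
      rw [Real.rpow_add hpos, add_mul, Real.exp_add]
      ring
    rwa [hval] at hprod
  have hd : ∀ z : ℝ, |z| < Real.pi →
      HasSum (fun n => (E (α + β) (x + y) n / (Nat.factorial n : ℝ)) * z ^ n) (F z) :=
    hasSum_aux E hE (α + β) (x + y)
  have heq := coeff_unique _ c F hd hc
  have heqm : E (α + β) (x + y) m / (Nat.factorial m : ℝ) = c m := congrFun heq m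
  have hm : E (α + β) (x + y) m = (Nat.factorial m : ℝ) * c m := by
    have hfac : (Nat.factorial m : ℝ) ≠ 0 := Nat.cast_ne_zero.mpr (Nat.factorial_ne_zero m)
    field_simp at heqm
    linarith [heqm]
  rw [hm, hc_def]
  rw [Finset.mul_sum]
  refine Finset.sum_congr rfl fun j hj => ?_
  have hj' : j ≤ m := Nat.lt_succ_iff.mp (Finset.mem_range.mp hj)
  rw [ha_def, hb_def]
  rw [Nat.cast_choose ℝ hj']
  have h1 : (Nat.factorial j : ℝ) ≠ 0 := Nat.cast_ne_zero.mpr (Nat.factorial_ne_zero j)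
  have h2 : (Nat.factorial (m - j) : ℝ) ≠ 0 := Nat.cast_ne_zero.mpr (Nat.factorial_ne_zero _)
  field_simp

lemma genEulerMatrix_mul (E : ℝ → ℝ → ℕ → ℝ) (hE : IsGenEulerFamily E) (n : ℕ) (α β x y : ℝ) :
    genEulerMatrix E n α x * genEulerMatrix E n β y = genEulerMatrix E n (α + β) (x + y) := by
  ext i l
  rw [Matrix.mul_apply]
  simp only [genEulerMatrix, Matrix.of_apply]
  set I := (i : ℕ) with hIdef
  set L := (l : ℕ) with hLdef
  set g : ℕ → ℝ := fun j =>
    (Nat.choose I j : ℝ) * E α x (I - j) * ((Nat.choose j L : ℝ) * E β y (j - L)) with hg_def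
  have hI : I ≤ n := Nat.lt_succ_iff.mp i.isLt
  rw [Fin.sum_univ_eq_sum_range g]
  by_cases hLI : L ≤ I
  · set m := I - L with hm_def
    have hsub : Finset.Icc L I ⊆ Finset.range (n + 1) := by
      intro j hj
      simp only [Finset.mem_Icc] at hj
      simp only [Finset.mem_range]
      omega
    have hzero : ∀ j ∈ Finset.range (n + 1), j ∉ Finset.Icc L I → g j = 0 := by
      intro j _ hj
      simp only [Finset.mem_Icc, not_and, not_le] at hj
      simp only [hg_def]
      rcases le_or_gt L j with h1 | h1
      · have h2 : I < j := hj h1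
        rw [Nat.choose_eq_zero_of_lt h2]
        simp
      · rw [Nat.choose_eq_zero_of_lt h1]
        simp
    rw [← Finset.sum_subset hsub hzero]
    rw [← Finset.Ico_add_one_right_eq_Icc, Finset.sum_Ico_eq_sum_range]
    have hrange : I + 1 - L = m + 1 := by omega
    rw [hrange]
    have hterm : ∀ t ∈ Finset.range (m + 1),
        g (L + t) = (Nat.choose I L : ℝ) *
          ((Nat.choose m t : ℝ) * E β y t * E α x (m - t)) := by
      intro t ht
      have ht' : t ≤ m := Nat.lt_succ_iff.mp (Finset.mem_range.mp ht)
      have hLt : L + t ≤ I := by omega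
      have hchoose : Nat.choose I (L + t) * Nat.choose (L + t) L
          = Nat.choose I L * Nat.choose m t := by
        have := Nat.choose_mul (n := I) (Nat.le_add_right L t)
        rw [Nat.add_sub_cancel_left] at this
        rw [this, hm_def]
      have e1 : I - (L + t) = m - t := by omega
      have e2 : L + t - L = t := by omega
      simp only [hg_def, e1, e2]
      have : (Nat.choose I (L + t) : ℝ) * (Nat.choose (L + t) L : ℝ)
          = (Nat.choose I L : ℝ) * (Nat.choose m t : ℝ) := by
        exact_mod_cast congrArg (Nat.cast : ℕ → ℝ) hchoose
      linear_combination E α x (m - t) * E β y t * this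
    rw [Finset.sum_congr rfl hterm, ← Finset.mul_sum]
    have hadd := euler_add_formula E hE β α y x m
    rw [add_comm β α, add_comm y x] at hadd
    rw [← hadd]
  · have hIL : I < L := by omega
    rw [Nat.choose_eq_zero_of_lt hIL]
    simp only [Nat.cast_zero, zero_mul]
    refine Finset.sum_eq_zero fun j _ => ?_
    simp only [hg_def]
    rcases le_or_gt j I with h1 | h1
    · have h2 : j < L := by omega
      rw [Nat.choose_eq_zero_of_lt h2]
      simp
    · rw [Nat.choose_eq_zero_of_lt h1]
      simp

theorem euler_matrix_pow (E : ℝ → ℝ → ℕ → ℝ) (hE : IsGenEulerFamily E)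
    (n : ℕ) (k : ℕ) (hk : 1 ≤ k) (α x : ℝ) :
    (genEulerMatrix E n α x) ^ k = genEulerMatrix E n ((k : ℝ) * α) ((k : ℝ) * x) ∧
    (genEulerMatrix E n 1 x) ^ k = genEulerMatrix E n (k : ℝ) ((k : ℝ) * x) ∧
    (genEulerMatrix E n 1 0) ^ k = genEulerMatrix E n (k : ℝ) 0 := by
  have main : ∀ k : ℕ, 1 ≤ k → ∀ α x : ℝ,
      (genEulerMatrix E n α x) ^ k = genEulerMatrix E n ((k : ℝ) * α) ((k : ℝ) * x) := by
    intro k hk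
    induction k with
    | zero => omega
    | succ k ih =>
      intro α x
      rcases Nat.eq_zero_or_pos k with h0 | hpos
      · subst h0
        simp
      · rw [pow_succ, ih hpos, genEulerMatrix_mul E hE]
        congr 1 <;> push_cast <;> ring
  refine ⟨main k hk α x, ?_, ?_⟩
  · have := main k hk 1 x
    rwa [mul_one] at this
  · have := main k hk 1 0
    rwa [mul_one, mul_zero] at this
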